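/- Within its affine hull, Q_n is defined by the n² inequalities x_i ≥ 0 (0 ≤ i ≤ n²−1), i.e. Q_n equals the intersection of its affine hull with the nonnegative orthant; moreover each inequality x_i ≥ 0 defines a facet, so Q_n has exactly n² facets. -/

import Mathlib

open Matrix Finset

variable (n : ℕ) [NeZero n]

/-- Permutation matrix of `σ`: entries `δ_{i, σ(j)}`. -/
def permMat (σ : Equiv.Perm (ZMod n)) : Matrix (ZMod n) (ZMod n) ℝ :=
  Matrix.of fun i j => if i = σ j then 1 else 0

/-- Rotation `x ↦ x + 1` of the regular n-gon with vertex set `ZMod n`. -/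
def rot : Equiv.Perm (ZMod n) := Equiv.addRight 1

/-- Reflection `x ↦ -x` of the regular n-gon. -/
def rfl' : Equiv.Perm (ZMod n) := Equiv.neg (ZMod n)

/-- The dihedral group `D_n ≤ S_n`, symmetries of the regular n-gon. -/
def dihedral : Subgroup (Equiv.Perm (ZMod n)) := Subgroup.closure {rot n, rfl' n}

/-- Adjacency matrix of the n-cycle `C_n`. -/
def cycAdj : Matrix (ZMod n) (ZMod n) ℝ :=
  Matrix.of fun i j => if j = i + 1 ∨ j = i - 1 then 1 else 0

/-- The permutation polytope `DP_n = conv{M_σ : σ ∈ D_n} ⊆ ℝ^{n×n}`. -/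
def DP : Set (Matrix (ZMod n) (ZMod n) ℝ) :=
  convexHull ℝ {M | ∃ σ ∈ dihedral n, M = permMat n σ}

/-- The cyclic shift matrix `R`. -/
def Rmat : Matrix (ZMod n) (ZMod n) ℝ := Matrix.of fun i j => if j = i + 1 then 1 else 0

/-- The `2n` rows of `W = [[I,...,I],[I,R,...,R^{n-1}]]`, viewed as vectors in
`ℝ^{n²} = Matrix (ZMod n) (ZMod n) ℝ`; the first matrix coordinate is the block index. -/
def Wrow : Bool × ZMod n → Matrix (ZMod n) (ZMod n) ℝ
  | (false, k) => Matrix.of fun _ j => if j = k then 1 else 0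
  | (true, k) => Matrix.of fun b j => (Rmat n ^ b.val) k j

/-- The polytope `Q_n ⊆ ℝ^{n²}`. -/
def Qpoly : Set (Matrix (ZMod n) (ZMod n) ℝ) := convexHull ℝ (Set.range (Wrow n))

/-- A point of `ℝ^{n²}` is a lattice point if all its coordinates are integers. -/
def IsInt (x : Matrix (ZMod n) (ZMod n) ℝ) : Prop := ∀ b j, ∃ z : ℤ, x b j = (z : ℝ)

lemma Rmat_pow_apply (m : ℕ) (k j : ZMod n) :
    (Rmat n ^ m) k j = if j = k + (m : ZMod n) then 1 else 0 := by
  induction m generalizing j with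
  | zero => simp [Matrix.one_apply, eq_comm]
  | succ m ih =>
    rw [pow_succ, Matrix.mul_apply]
    have : ∀ c : ZMod n, (Rmat n ^ m) k c * Rmat n c j
        = if c = k + (m : ZMod n) then (if j = c + 1 then 1 else 0) else 0 := by
      intro c; rw [ih]; by_cases h : c = k + (m : ZMod n) <;> simp [h, Rmat]
    simp only [this, Finset.sum_ite_eq' Finset.univ, Finset.mem_univ, if_true]
    push_cast
    ring_nf

lemma Wrow_true_apply (k b j : ZMod n) : Wrow n (true, k) b j = if j = k + b then 1 else 0 := by
  show (Rmat n ^ b.val) k j = _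
  rw [Rmat_pow_apply, ZMod.natCast_rightInverse b]

lemma Wrow_false_apply (k b j : ZMod n) : Wrow n (false, k) b j = if j = k then 1 else 0 := rfl

lemma comb_apply (w : Bool × ZMod n → ℝ) (b j : ZMod n) :
    (∑ i, w i • Wrow n i) b j = w (false, j) + w (true, j - b) := by
  have h1 : ∀ i : Bool × ZMod n, (w i • Wrow n i) b j = w i * Wrow n i b j := fun _ => rfl
  rw [Matrix.sum_apply]
  simp only [h1]
  rw [Fintype.sum_prod_type]
  rw [Fintype.sum_bool]
  have ht : ∀ k : ZMod n, w (true, k) * Wrow n (true, k) b j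
      = if k = j - b then w (true, k) else 0 := by
    intro k; rw [Wrow_true_apply]
    by_cases h : k = j - b
    · subst h; simp
    · have : ¬ j = k + b := fun hc => h (by rw [hc]; ring)
      simp [this, h]
  have hf : ∀ k : ZMod n, w (false, k) * Wrow n (false, k) b j
      = if k = j then w (false, k) else 0 := by
    intro k; rw [Wrow_false_apply]
    by_cases h : k = j
    · subst h; simp
    · simp [h, Ne.symm h]
  simp only [ht, hf, Finset.sum_ite_eq' Finset.univ, Finset.mem_univ, if_true]
  ring


lemma mem_Qpoly_iff {x : Matrix (ZMod n) (ZMod n) ℝ} :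
    x ∈ Qpoly n ↔ ∃ w : Bool × ZMod n → ℝ,
      (∀ i, 0 ≤ w i) ∧ ∑ i, w i = 1 ∧ x = ∑ i, w i • Wrow n i := by
  constructor
  · intro hx
    rw [Qpoly, convexHull_range_eq_exists_affineCombination] at hx
    obtain ⟨s, w, hw0, hw1, hx⟩ := hx
    classical
    refine ⟨(s : Set _).indicator w, fun i => ?_, ?_, ?_⟩
    · by_cases h : i ∈ s <;> simp [Set.indicator_apply, h, hw0 i]
    · rw [← hw1]
      simp only [Set.indicator_apply, Finset.mem_coe]
      rw [Fintype.sum_extend_by_zero s w]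
    · have h1 : ∑ i, (s : Set _).indicator w i = 1 := by
        rw [← hw1]
        simp only [Set.indicator_apply, Finset.mem_coe]
        rw [Fintype.sum_extend_by_zero s w]
      rw [← Finset.univ.affineCombination_eq_linear_combination _ _ h1, ← hx,
        Finset.affineCombination_indicator_subset w (Wrow n) s.subset_univ]
  · rintro ⟨w, h0, h1, rfl⟩
    exact mem_convexHull_of_exists_fintype w (Wrow n) h0 h1 (fun i => Set.mem_range_self i) rfl

lemma mem_affineSpanW_iff {x : Matrix (ZMod n) (ZMod n) ℝ} :
    x ∈ affineSpan ℝ (Set.range (Wrow n)) ↔ ∃ w : Bool × ZMod n → ℝ,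
      ∑ i, w i = 1 ∧ x = ∑ i, w i • Wrow n i := by
  constructor
  · intro h
    obtain ⟨w, hw, hx⟩ := eq_affineCombination_of_mem_affineSpan_of_fintype h
    exact ⟨w, hw, by rw [hx, Finset.univ.affineCombination_eq_linear_combination _ _ hw]⟩
  · rintro ⟨w, hw, rfl⟩
    rw [← Finset.univ.affineCombination_eq_linear_combination _ _ hw]
    exact affineCombination_mem_affineSpan hw _

lemma Qpoly_eq_inter :
    Qpoly n = {x | x ∈ affineSpan ℝ (Set.range (Wrow n)) ∧ ∀ b j, 0 ≤ x b j} := by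
  ext x
  constructor
  · intro hx
    obtain ⟨w, h0, h1, rfl⟩ := (mem_Qpoly_iff n).1 hx
    refine ⟨(mem_affineSpanW_iff n).2 ⟨w, h1, rfl⟩, fun b j => ?_⟩
    rw [comb_apply]
    exact add_nonneg (h0 _) (h0 _)
  · rintro ⟨hs, hpos⟩
    obtain ⟨w, h1, rfl⟩ := (mem_affineSpanW_iff n).1 hs
    obtain ⟨k₀, -, hk₀⟩ := Finset.exists_min_image Finset.univ (fun k => w (false, k))
      ⟨0, Finset.mem_univ 0⟩
    set t := w (false, k₀) with ht
    refine (mem_Qpoly_iff n).2 ⟨fun i => if i.1 then w i + t else w i - t, fun i => ?_, ?_, ?_⟩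
    · obtain ⟨tb, k⟩ := i
      cases tb
      · simpa using sub_nonneg.2 (hk₀ k (Finset.mem_univ k))
      · have := hpos (k₀ - k) k₀
        rw [comb_apply] at this
        simp only [sub_sub_cancel] at this
        simpa using by linarith
    · rw [Fintype.sum_prod_type, Fintype.sum_bool] at h1 ⊢
      simp only [if_true, if_false, Bool.false_eq_true]
      rw [Finset.sum_add_distrib, Finset.sum_sub_distrib]
      linarith
    · ext b j
      rw [comb_apply, comb_apply]
      simp only [if_true, if_false, Bool.false_eq_true]
      ring

lemma dep_lemma {w : Bool × ZMod n → ℝ} (h : ∑ i, w i • Wrow n i = 0) :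
    ∀ i : Bool × ZMod n, w i = if i.1 then w (true, 0) else - w (true, 0) := by
  have h' : ∀ b j : ZMod n, w (false, j) + w (true, j - b) = 0 := by
    intro b j
    rw [← comb_apply, h]
    rfl
  rintro ⟨tb, k⟩
  have h1 : w (true, k) = - w (false, 0) := by have := h' (-k) 0; simp at this; linarith
  have h2 : w (true, 0) = - w (false, 0) := by have := h' 0 0; simp at this; linarith
  cases tb
  · have := h' (k - k) k
    simp at this
    simp only [Bool.false_eq_true, if_false]
    linarith
  · simp only [if_true]; linarith

lemma affInd_punctured (i₀ : Bool × ZMod n) :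
    AffineIndependent ℝ (fun i : {i : Bool × ZMod n // i ≠ i₀} => Wrow n ↑i) := by
  classical
  rw [affineIndependent_iff]
  intro s w hw0 hsum e he
  set W : Bool × ZMod n → ℝ := Function.extend Subtype.val
    (fun e => if e ∈ s then w e else 0) 0 with hW
  have hWval : ∀ e : {i : Bool × ZMod n // i ≠ i₀}, W ↑e = if e ∈ s then w e else 0 :=
    fun e => Subtype.val_injective.extend_apply _ _ e
  have hWi₀ : W i₀ = 0 := by
    rw [hW, Function.extend_apply']
    · rfl
    · rintro ⟨e, he⟩; exact e.2 (congrArg id he)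
  have hsum' : ∑ i, W i • Wrow n i = 0 := by
    rw [← Finset.sum_erase Finset.univ (a := i₀)
      (f := fun i => W i • Wrow n i) (by show W i₀ • Wrow n i₀ = 0; rw [hWi₀]; simp)]
    rw [Finset.sum_subtype (Finset.univ.erase i₀) (p := fun i => i ≠ i₀)
      (fun x => by simp) (fun i => W i • Wrow n i)]
    calc ∑ e : {i // i ≠ i₀}, W ↑e • Wrow n ↑e
        = ∑ e : {i // i ≠ i₀}, if e ∈ s then w e • Wrow n ↑e else 0 := by
          refine Finset.sum_congr rfl fun e _ => ?_
          rw [hWval e]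
          by_cases h : e ∈ s <;> simp [h]
      _ = ∑ e ∈ s, w e • Wrow n ↑e := by
          rw [Finset.sum_ite_mem, Finset.univ_inter]
      _ = 0 := hsum
  have hdep := dep_lemma n hsum'
  have ht0 : W (true, 0) = 0 := by
    rcases i₀ with ⟨tb, k⟩
    cases tb
    · have := hdep (true, 0)
      simp at this
      have h2 := hdep (false, k)
      simp only [Bool.false_eq_true, if_false] at h2
      rw [hWi₀] at h2
      linarith
    · have := hdep (true, k)
      rw [hWi₀] at this
      simp at this
      rw [this]
  have : W ↑e = 0 := by
    rw [hdep ↑e, ht0]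
    simp
  rw [hWval e, if_pos he] at this
  exact this

lemma sum_Wrow (t : Bool) : ∑ k : ZMod n, Wrow n (t, k) = Matrix.of fun _ _ => (1:ℝ) := by
  ext b j
  rw [Matrix.sum_apply]
  cases t
  · simp only [Wrow_false_apply]
    simp
  · simp only [Wrow_true_apply]
    have : ∀ k : ZMod n, (if j = k + b then (1:ℝ) else 0) = if k = j - b then 1 else 0 := by
      intro k
      by_cases h : k = j - b
      · subst h; simp
      · have : ¬ j = k + b := fun hc => h (by rw [hc]; ring)
        simp [this, h]
    simp only [this]
    simp

lemma Wrow_mem_Q (i : Bool × ZMod n) : Wrow n i ∈ Qpoly n :=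
  subset_convexHull ℝ _ (Set.mem_range_self i)

lemma Q_nonneg {x : Matrix (ZMod n) (ZMod n) ℝ} (hx : x ∈ Qpoly n) (b j : ZMod n) : 0 ≤ x b j := by
  rw [Qpoly_eq_inter] at hx
  exact hx.2 b j

lemma extreme_coord (b j : ZMod n) :
    IsExtreme ℝ (Qpoly n) {x ∈ Qpoly n | x b j = 0} := by
  constructor
  · exact fun x hx => hx.1
  · rintro x1 hx1 x2 hx2 x ⟨hxQ, hx0⟩ ⟨a, c, ha, hc, hac, hx⟩
    have hx1' := Q_nonneg n hx1 b j
    have hx2' := Q_nonneg n hx2 b j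
    have hsum : a * x1 b j + c * x2 b j = 0 := by
      rw [← hx0, ← hx]; rfl
    have h1 : x1 b j = 0 := by nlinarith
    have h2 : x2 b j = 0 := by nlinarith
    exact Set.mem_sep hx1 h1

lemma extreme_eq_hull {F : Set (Matrix (ZMod n) (ZMod n) ℝ)}
    (hF : IsExtreme ℝ (Qpoly n) F) (hC : Convex ℝ F) :
    F = convexHull ℝ (Wrow n '' {i | Wrow n i ∈ F}) := by
  classical
  refine Set.Subset.antisymm ?_ (convexHull_min (fun y hy => by
    obtain ⟨i, hi, rfl⟩ := hy; exact hi) hC)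
  intro x hx
  obtain ⟨w, h0, h1, rfl⟩ := (mem_Qpoly_iff n).1 (hF.1 hx)
  have hsupp : ∀ i, 0 < w i → Wrow n i ∈ F := by
    intro i hi
    by_cases hi1 : w i = 1
    · have hz : ∀ i', i' ≠ i → w i' = 0 := by
        intro i' hne'
        have hle : ∑ i'' ∈ Finset.univ.erase i, w i'' = 0 := by
          have := Finset.add_sum_erase Finset.univ w (Finset.mem_univ i)
          rw [h1, hi1] at this
          linarith
        exact (Finset.sum_eq_zero_iff_of_nonneg (fun i'' _ => h0 i'')).1 hle i'
          (Finset.mem_erase.2 ⟨hne', Finset.mem_univ i'⟩)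
      have : ∑ i', w i' • Wrow n i' = Wrow n i := by
        rw [← Finset.add_sum_erase Finset.univ _ (Finset.mem_univ i), hi1, one_smul]
        rw [Finset.sum_eq_zero (fun i' hi' => by
          rw [hz i' (Finset.mem_erase.1 hi').1, zero_smul]), add_zero]
      rwa [this] at hx
    · have hwi : w i < 1 := lt_of_le_of_ne (by
        calc w i ≤ ∑ i', w i' := Finset.single_le_sum (fun i' _ => h0 i') (Finset.mem_univ i)
        _ = 1 := h1) hi1
      set c : ℝ := 1 - w i with hc
      have hcpos : 0 < c := by linarith
      set y := c⁻¹ • ∑ i' ∈ Finset.univ.erase i, w i' • Wrow n i' with hy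
      have hyQ : y ∈ Qpoly n := by
        refine (mem_Qpoly_iff n).2 ⟨fun i' => if i' = i then 0 else c⁻¹ * w i', fun i' => ?_, ?_, ?_⟩
        · by_cases h : i' = i
          · simp [h]
          · simp only [h, if_false]
            exact mul_nonneg (le_of_lt (inv_pos.2 hcpos)) (h0 i')
        · rw [← Finset.add_sum_erase Finset.univ _ (Finset.mem_univ i)]
          simp only [if_pos rfl]
          rw [Finset.sum_congr rfl (fun i' hi' => by
            rw [if_neg (Finset.mem_erase.1 hi').1]), ← Finset.mul_sum]
          have hsum_erase : ∑ i' ∈ Finset.univ.erase i, w i' = c := by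
            have := Finset.add_sum_erase Finset.univ w (Finset.mem_univ i)
            rw [h1] at this
            rw [hc]; linarith
          rw [hsum_erase]
          field_simp
          simp
        · rw [hy, Finset.smul_sum, ← Finset.add_sum_erase Finset.univ _ (Finset.mem_univ i)]
          simp only [if_pos rfl, if_true, ite_true, eq_self_iff_true, zero_smul, zero_add]
          refine Finset.sum_congr rfl (fun i' hi' => ?_)
          rw [if_neg (Finset.mem_erase.1 hi').1, smul_smul]
      have hseg : ∑ i', w i' • Wrow n i' ∈ openSegment ℝ (Wrow n i) y := by
        refine ⟨w i, c, hi, hcpos, by rw [hc]; ring, ?_⟩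
        rw [hy, smul_smul]
        rw [mul_inv_cancel₀ (ne_of_gt hcpos), one_smul]
        rw [← Finset.add_sum_erase Finset.univ _ (Finset.mem_univ i)]
      exact hF.2 (Wrow_mem_Q n i) hyQ hx hseg
  obtain ⟨i₁, hi₁⟩ : ∃ i₁, 0 < w i₁ := by
    by_contra h
    push_neg at h
    have : ∑ i, w i ≤ 0 := Finset.sum_nonpos (fun i _ => h i)
    rw [h1] at this; linarith
  refine mem_convexHull_of_exists_fintype w
    (fun i => if 0 < w i then Wrow n i else Wrow n i₁) h0 h1 (fun i => ?_) ?_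
  · by_cases h : 0 < w i
    · simp only [h, if_true]
      exact ⟨i, hsupp i h, rfl⟩
    · simp only [h, if_false]
      exact ⟨i₁, hsupp i₁ hi₁, rfl⟩
  · refine Finset.sum_congr rfl (fun i _ => ?_)
    by_cases h : 0 < w i
    · simp only [h, if_true]
    · have : w i = 0 := le_antisymm (not_lt.1 h) (h0 i)
      simp only [this, zero_smul]

lemma affInd_on (S : Finset (Bool × ZMod n)) {i₀ : Bool × ZMod n} (hi₀ : i₀ ∉ S) :
    AffineIndependent ℝ (fun i : S => Wrow n ↑i) := by
  exact AffineIndependent.comp_embedding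
    (⟨fun e => ⟨↑e, fun h => hi₀ (h ▸ e.2)⟩, fun a b hab => by
      apply Subtype.ext
      exact congrArg (Subtype.val : {i : Bool × ZMod n // i ≠ i₀} → Bool × ZMod n) hab⟩ :
      S ↪ {i : Bool × ZMod n // i ≠ i₀})
    (affInd_punctured n i₀)

lemma vectorSpan_hull_image (S : Finset (Bool × ZMod n)) :
    vectorSpan ℝ (convexHull ℝ (Wrow n '' ↑S)) = vectorSpan ℝ (Set.range fun i : S => Wrow n ↑i) := by
  rw [← direction_affineSpan, affineSpan_convexHull, direction_affineSpan]
  congr 1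
  ext x
  simp [Set.mem_image, Set.mem_range]

lemma finrank_hull (S : Finset (Bool × ZMod n)) {i₀ : Bool × ZMod n} (hi₀ : i₀ ∉ S) (m : ℕ)
    (hcard : S.card = m + 1) :
    Module.finrank ℝ (vectorSpan ℝ (convexHull ℝ (Wrow n '' ↑S))) = m := by
  rw [vectorSpan_hull_image]
  exact (affInd_on n S hi₀).finrank_vectorSpan (by rw [Fintype.card_coe]; exact hcard)

lemma face_convex (b j : ZMod n) : Convex ℝ {x ∈ Qpoly n | x b j = 0} := by
  have h1 : Convex ℝ (Qpoly n) := convex_convexHull ℝ _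
  have h2 : Convex ℝ {x : Matrix (ZMod n) (ZMod n) ℝ | x b j = 0} := by
    intro x hx y hy a c ha hc hac
    have : (a • x + c • y) b j = a * x b j + c * y b j := rfl
    simp only [Set.mem_setOf_eq] at hx hy ⊢
    rw [this, hx, hy]; ring
  exact h1.inter h2

lemma coordFace_eq_hull (hn : 3 ≤ n) (b j : ZMod n) :
    {x ∈ Qpoly n | x b j = 0}
      = convexHull ℝ (Wrow n '' ↑(Finset.univ \ {(false, j), (true, j - b)})) := by
  classical
  have h1ne : (1 : ZMod n) ≠ 0 := by
    intro h
    have := ZMod.val_cast_of_lt (show 1 < n by omega)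
    rw [show ((1:ℕ) : ZMod n) = (1 : ZMod n) by push_cast; ring, h] at this
    simp at this
  apply Set.Subset.antisymm
  · intro x hx
    obtain ⟨w, h0, h1, rfl⟩ := (mem_Qpoly_iff n).1 hx.1
    have hx0 := hx.2
    rw [comb_apply] at hx0
    have hwf : w (false, j) = 0 := by have := h0 (false, j); have := h0 (true, j - b); linarith
    have hwt : w (true, j - b) = 0 := by have := h0 (false, j); have := h0 (true, j - b); linarith
    refine mem_convexHull_of_exists_fintype w
      (fun i => if i = (false, j) ∨ i = (true, j - b) then Wrow n (true, j - b + 1) else Wrow n i)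
      h0 h1 (fun i => ?_) ?_
    · by_cases h : i = (false, j) ∨ i = (true, j - b)
      · simp only [h, if_true]
        refine ⟨(true, j - b + 1), ?_, rfl⟩
        simp only [Finset.coe_sdiff, Finset.coe_univ, Set.mem_diff, Set.mem_univ, true_and,
          Finset.coe_insert, Finset.coe_singleton, Set.mem_insert_iff, Set.mem_singleton_iff]
        push_neg
        refine ⟨by simp, ?_⟩
        intro hc
        have : j - b + 1 = j - b := by exact_mod_cast congrArg Prod.snd hc
        exact h1ne (by linear_combination this)
      · simp only [h, if_false]
        refine ⟨i, ?_, rfl⟩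
        simp only [Finset.coe_sdiff, Finset.coe_univ, Set.mem_diff, Set.mem_univ, true_and,
          Finset.coe_insert, Finset.coe_singleton, Set.mem_insert_iff, Set.mem_singleton_iff]
        push_neg at h ⊢
        exact h
    · refine Finset.sum_congr rfl (fun i _ => ?_)
      by_cases h : i = (false, j) ∨ i = (true, j - b)
      · rcases h with h | h <;> subst h <;>
          simp [hwf, hwt]
      · simp only [h, if_false]
  · refine convexHull_min (fun y hy => ?_) (face_convex n b j)
    obtain ⟨i, hi, rfl⟩ := hy
    simp only [Finset.coe_sdiff, Finset.coe_univ, Set.mem_diff, Set.mem_univ, true_and,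
      Finset.coe_insert, Finset.coe_singleton, Set.mem_insert_iff, Set.mem_singleton_iff] at hi
    push_neg at hi
    refine ⟨Wrow_mem_Q n i, ?_⟩
    obtain ⟨tb, k⟩ := i
    cases tb
    · rw [Wrow_false_apply]
      have : k ≠ j := fun h => hi.1 (by rw [h])
      simp [Ne.symm this]
    · rw [Wrow_true_apply]
      have : k ≠ j - b := fun h => hi.2 (by rw [h])
      have h2 : j ≠ k + b := fun h => this (by rw [h]; ring)
      simp [h2]

lemma not_extreme_missing (hn : 3 ≤ n) {F : Set (Matrix (ZMod n) (ZMod n) ℝ)}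
    (hF : IsExtreme ℝ (Qpoly n) F) (hC : Convex ℝ F) (t : Bool) (p : ZMod n)
    (hp : Wrow n (t, p) ∉ F) (hall : ∀ k, Wrow n (!t, k) ∈ F) : False := by
  classical
  have hnR : (0:ℝ) < n := by positivity
  have h3R : (3:ℝ) ≤ n := by exact_mod_cast hn
  have hnR1 : (0:ℝ) < (n:ℝ) - 1 := by linarith
  have hcast : ((n - 1 : ℕ) : ℝ) = (n:ℝ) - 1 := by
    have h1 : 1 ≤ n := by omega
    push_cast [h1]; ring
  set z : Matrix (ZMod n) (ZMod n) ℝ := (n:ℝ)⁻¹ • ∑ k, Wrow n (!t, k) with hz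
  have hzF : z ∈ F := by
    rw [hz, Finset.smul_sum]
    refine hC.sum_mem (fun k _ => by positivity) ?_ (fun k _ => hall k)
    rw [Finset.sum_const, Finset.card_univ, ZMod.card, nsmul_eq_mul]
    field_simp
  set y : Matrix (ZMod n) (ZMod n) ℝ :=
    ((n:ℝ) - 1)⁻¹ • ∑ k ∈ Finset.univ.erase p, Wrow n (t, k) with hy
  have hwsum : ∑ i : Bool × ZMod n, (if i.1 = t ∧ i.2 ≠ p then ((n:ℝ) - 1)⁻¹ else 0) = 1 := by
    rw [Fintype.sum_prod_type]
    have hsum1 : ∀ tb : Bool, (∑ k : ZMod n, if tb = t ∧ k ≠ p then ((n:ℝ) - 1)⁻¹ else 0)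
        = if tb = t then 1 else 0 := by
      intro tb
      by_cases h : tb = t
      · rw [if_pos h]
        have hk' : ∀ k : ZMod n, (if tb = t ∧ k ≠ p then ((n:ℝ) - 1)⁻¹ else 0)
            = if k ∈ Finset.univ.erase p then ((n:ℝ) - 1)⁻¹ else 0 := by
          intro k; by_cases hk : k = p <;> simp [h, hk]
        rw [Finset.sum_congr rfl fun k _ => hk' k, Finset.sum_ite_mem, Finset.univ_inter,
          Finset.sum_const, Finset.card_erase_of_mem (Finset.mem_univ p), Finset.card_univ,
          ZMod.card, nsmul_eq_mul, hcast]
        field_simp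
      · rw [if_neg h]
        exact Finset.sum_eq_zero fun k _ => if_neg (fun hc => h hc.1)
    calc ∑ tb : Bool, ∑ k : ZMod n, (if (tb, k).1 = t ∧ (tb, k).2 ≠ p then ((n:ℝ) - 1)⁻¹ else 0)
        = ∑ tb : Bool, if tb = t then (1:ℝ) else 0 :=
          Finset.sum_congr rfl fun tb _ => hsum1 tb
      _ = 1 := by simp
  have hyQ : y ∈ Qpoly n := by
    refine (mem_Qpoly_iff n).2 ⟨fun i => if i.1 = t ∧ i.2 ≠ p then ((n:ℝ) - 1)⁻¹ else 0,
      fun i => ?_, hwsum, ?_⟩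
    · simp only []
      by_cases h : i.1 = t ∧ i.2 ≠ p
      · rw [if_pos h]; exact le_of_lt (inv_pos.2 hnR1)
      · rw [if_neg h]
    · have hterm : ∀ i : Bool × ZMod n,
          (if i.1 = t ∧ i.2 ≠ p then ((n:ℝ) - 1)⁻¹ else 0) • Wrow n i
            = if i ∈ (Finset.univ.erase p).image (fun k => (t, k))
                then ((n:ℝ) - 1)⁻¹ • Wrow n i else 0 := by
        rintro ⟨tb, k⟩
        have hmem : (tb, k) ∈ (Finset.univ.erase p).image (fun k => (t, k)) ↔ (tb = t ∧ k ≠ p) := by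
          simp only [Finset.mem_image, Finset.mem_erase, Finset.mem_univ, and_true]
          constructor
          · rintro ⟨k', hk', h⟩
            have h1 : t = tb := congrArg Prod.fst h
            have h2 : k' = k := congrArg Prod.snd h
            exact ⟨h1.symm, h2 ▸ hk'⟩
          · rintro ⟨h1, h2⟩; exact ⟨k, h2, by rw [h1]⟩
        by_cases h : tb = t ∧ k ≠ p
        · rw [if_pos h, if_pos (hmem.2 h)]
        · rw [if_neg h, if_neg (fun hc => h (hmem.1 hc)), zero_smul]
      calc y = ∑ k ∈ Finset.univ.erase p, ((n:ℝ) - 1)⁻¹ • Wrow n (t, k) := by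
            rw [hy, Finset.smul_sum]
        _ = ∑ i ∈ (Finset.univ.erase p).image (fun k => (t, k)), ((n:ℝ) - 1)⁻¹ • Wrow n i := by
            rw [Finset.sum_image (fun a _ b _ h => congrArg Prod.snd h)]
        _ = ∑ i : Bool × ZMod n, if i ∈ (Finset.univ.erase p).image (fun k => (t, k))
              then ((n:ℝ) - 1)⁻¹ • Wrow n i else 0 := by
            rw [Finset.sum_ite_mem, Finset.univ_inter]
        _ = ∑ i : Bool × ZMod n, (if i.1 = t ∧ i.2 ≠ p then ((n:ℝ) - 1)⁻¹ else 0) • Wrow n i :=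
            Finset.sum_congr rfl fun i _ => (hterm i).symm
  have hseg : z ∈ openSegment ℝ (Wrow n (t, p)) y := by
    refine ⟨(n:ℝ)⁻¹, 1 - (n:ℝ)⁻¹, by positivity, ?_, by ring, ?_⟩
    · have : (n:ℝ)⁻¹ < 1 := by
        rw [inv_lt_one_iff₀]; right; linarith
      linarith
    · have h1 : (1 - (n:ℝ)⁻¹) • y = (n:ℝ)⁻¹ • ∑ k ∈ Finset.univ.erase p, Wrow n (t, k) := by
        rw [hy, smul_smul]
        congr 1
        field_simp
      rw [h1, ← smul_add,
        Finset.add_sum_erase Finset.univ (fun k => Wrow n (t, k)) (Finset.mem_univ p)]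
      rw [hz, sum_Wrow, sum_Wrow]
  exact hp (hF.2 (Wrow_mem_Q n (t, p)) hyQ hzF hseg)

lemma Wrow_mem_face_iff (b j : ZMod n) (i : Bool × ZMod n) :
    Wrow n i ∈ {x ∈ Qpoly n | x b j = 0} ↔ (i ≠ (false, j) ∧ i ≠ (true, j - b)) := by
  obtain ⟨tb, k⟩ := i
  constructor
  · rintro ⟨-, h0⟩
    cases tb
    · refine ⟨fun hc => ?_, fun hc => by exact absurd (congrArg Prod.fst hc) (by simp)⟩
      have hk : k = j := congrArg Prod.snd hc
      rw [Wrow_false_apply, hk, if_pos rfl] at h0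
      norm_num at h0
    · refine ⟨fun hc => by exact absurd (congrArg Prod.fst hc) (by simp), fun hc => ?_⟩
      have hk : k = j - b := congrArg Prod.snd hc
      rw [Wrow_true_apply, hk, if_pos (by ring)] at h0
      norm_num at h0
  · rintro ⟨h1, h2⟩
    refine ⟨Wrow_mem_Q n _, ?_⟩
    cases tb
    · have : k ≠ j := fun h => h1 (by rw [h])
      rw [Wrow_false_apply, if_neg (Ne.symm this)]
    · have : k ≠ j - b := fun h => h2 (by rw [h])
      rw [Wrow_true_apply, if_neg (fun h => this (by rw [h]; ring))]

lemma face_classify (hn : 3 ≤ n) {F : Set (Matrix (ZMod n) (ZMod n) ℝ)}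
    (h1 : IsExtreme ℝ (Qpoly n) F) (h2 : Convex ℝ F)
    (h3 : Module.finrank ℝ (vectorSpan ℝ F) = 2 * n - 3) :
    ∃ b j : ZMod n, F = {x ∈ Qpoly n | x b j = 0} := by
  classical
  have hcard_univ : Fintype.card (Bool × ZMod n) = 2 * n := by
    rw [Fintype.card_prod, Fintype.card_bool, ZMod.card]
  set S : Finset (Bool × ZMod n) := Finset.univ.filter (fun i => Wrow n i ∈ F) with hS
  have hSmem : ∀ i, i ∈ S ↔ Wrow n i ∈ F := fun i => by simp [hS]
  have hhull : F = convexHull ℝ (Wrow n '' ↑S) := by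
    rw [extreme_eq_hull n h1 h2]
    congr 2
    ext i
    simp [hS]
  by_cases hSuniv : S = Finset.univ
  · exfalso
    have hQF : Qpoly n ⊆ F := by
      have hset : (↑S : Set (Bool × ZMod n)) = Set.univ := by rw [hSuniv]; simp
      rw [hhull, hset, Set.image_univ]
      exact subset_rfl
    have hFQ : F = Qpoly n := Set.Subset.antisymm h1.1 hQF
    set T : Finset (Bool × ZMod n) := Finset.univ.erase (false, 0) with hT
    have hTcard : T.card = (2 * n - 2) + 1 := by
      rw [hT, Finset.card_erase_of_mem (Finset.mem_univ _), Finset.card_univ, hcard_univ]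
      omega
    have hfr : Module.finrank ℝ (vectorSpan ℝ (convexHull ℝ (Wrow n '' ↑T))) = 2 * n - 2 :=
      finrank_hull n T (Finset.notMem_erase _ _) _ hTcard
    have hle : vectorSpan ℝ (convexHull ℝ (Wrow n '' ↑T)) ≤ vectorSpan ℝ F := by
      rw [hFQ]
      exact vectorSpan_mono ℝ (convexHull_mono (by
        rintro y ⟨i, -, rfl⟩; exact Set.mem_range_self i))
    have hmono := Submodule.finrank_mono hle
    rw [hfr, h3] at hmono
    omega
  · obtain ⟨i₀, hi₀⟩ : ∃ i₀, i₀ ∉ S := by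
      by_contra h; push_neg at h; exact hSuniv (Finset.eq_univ_iff_forall.2 h)
    have hSne : S.Nonempty := by
      rcases Finset.eq_empty_or_nonempty S with h | h
      · exfalso
        have hFe : F = ∅ := by rw [hhull, h]; simp
        rw [hFe, vectorSpan_empty, finrank_bot] at h3
        omega
      · exact h
    have hfr : Module.finrank ℝ (vectorSpan ℝ F) = S.card - 1 := by
      rw [hhull]
      exact finrank_hull n S hi₀ _ (by have := Finset.card_pos.2 hSne; omega)
    have hScard : S.card = 2 * n - 2 := by
      have hlt : S.card < 2 * n := by
        rw [← hcard_univ]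
        exact (Finset.card_lt_iff_ne_univ S).2 hSuniv
      have hpos := Finset.card_pos.2 hSne
      have heq : S.card - 1 = 2 * n - 3 := by rw [← hfr, h3]
      omega
    have hcompl : Sᶜ.card = 2 := by
      rw [Finset.card_compl, hcard_univ, hScard]; omega
    obtain ⟨i₁, i₂, h12, hpair⟩ := Finset.card_eq_two.1 hcompl
    have hmemS : ∀ i, i ∈ S ↔ (i ≠ i₁ ∧ i ≠ i₂) := by
      intro i
      have h' : (i ∉ S) ↔ (i = i₁ ∨ i = i₂) := by
        rw [← Finset.mem_compl, hpair]; simp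
      constructor
      · intro h
        have hni : ¬(i = i₁ ∨ i = i₂) := fun hc => (h'.2 hc) h
        push_neg at hni
        exact hni
      · intro ⟨ha, hb⟩
        by_contra hc
        rcases h'.1 hc with h | h
        · exact ha h
        · exact hb h
    obtain ⟨t₁, k₁⟩ := i₁
    obtain ⟨t₂, k₂⟩ := i₂
    by_cases htt : t₁ = t₂
    · exfalso
      subst htt
      refine not_extreme_missing n hn h1 h2 t₁ k₁ ?_ ?_
      · intro hmem
        have hmm : (t₁, k₁) ∈ S := (hSmem _).2 hmem
        exact ((hmemS _).1 hmm).1 rfl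
      · intro k
        refine (hSmem _).1 ((hmemS _).2 ⟨?_, ?_⟩) <;>
          exact fun hc => Bool.not_ne_self t₁ (congrArg Prod.fst hc)
    · have key : ∀ p q : ZMod n, ({(false, p), (true, q)} : Finset (Bool × ZMod n)) = Sᶜ →
          ∃ b j : ZMod n, F = {x ∈ Qpoly n | x b j = 0} := by
        intro p q hpq
        refine ⟨p - q, p, ?_⟩
        rw [coordFace_eq_hull n hn (p - q) p, hhull]
        have hq : p - (p - q) = q := by ring
        rw [hq]
        congr 2
        have : S = (Sᶜ)ᶜ := (compl_compl S).symm
        rw [this, ← hpq]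
        ext i
        simp [Finset.mem_compl, Finset.mem_sdiff, Finset.mem_insert, Finset.mem_singleton]
        tauto
      cases t₁
      · cases t₂
        · exact absurd rfl htt
        · exact key k₁ k₂ hpair.symm
      · cases t₂
        · exact key k₂ k₁ (by rw [hpair]; exact Finset.pair_comm _ _)
        · exact absurd rfl htt

lemma face_finrank (hn : 3 ≤ n) (b j : ZMod n) :
    Module.finrank ℝ (vectorSpan ℝ {x ∈ Qpoly n | x b j = 0}) = 2 * n - 3 := by
  classical
  rw [coordFace_eq_hull n hn b j]
  refine finrank_hull n _ (i₀ := (false, j)) ?_ _ ?_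
  · simp
  · have hne : ((false, j) : Bool × ZMod n) ≠ (true, j - b) := by
      intro h; exact absurd (congrArg Prod.fst h) (by simp)
    rw [Finset.card_sdiff_of_subset (Finset.subset_univ _), Finset.card_univ,
      Fintype.card_prod, Fintype.card_bool, ZMod.card,
      Finset.card_insert_of_notMem (by simp [hne]), Finset.card_singleton]
    omega

lemma face_inj (hn : 3 ≤ n) :
    Function.Injective (fun bj : ZMod n × ZMod n =>
      {x ∈ Qpoly n | x bj.1 bj.2 = 0}) := by
  rintro ⟨b, j⟩ ⟨b', j'⟩ h
  simp only at h
  have hj : j = j' := by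
    by_contra hne
    have h1 : Wrow n (false, j) ∈ {x ∈ Qpoly n | x b' j' = 0} :=
      (Wrow_mem_face_iff n b' j' _).2
        ⟨fun hc => hne (congrArg Prod.snd hc), fun hc => absurd (congrArg Prod.fst hc) (by simp)⟩
    rw [← h] at h1
    exact ((Wrow_mem_face_iff n b j _).1 h1).1 rfl
  subst hj
  have hb : b = b' := by
    by_contra hne
    have hd : j - b ≠ j - b' := fun hc => hne (sub_right_injective hc)
    have h1 : Wrow n (true, j - b) ∈ {x ∈ Qpoly n | x b' j = 0} :=
      (Wrow_mem_face_iff n b' j _).2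
        ⟨fun hc => absurd (congrArg Prod.fst hc) (by simp), fun hc => hd (congrArg Prod.snd hc)⟩
    rw [← h] at h1
    exact ((Wrow_mem_face_iff n b j _).1 h1).2 rfl
  rw [hb]

theorem Q_facet_description' (hn : 3 ≤ n) :
    Qpoly n = {x | x ∈ affineSpan ℝ (Set.range (Wrow n)) ∧ ∀ b j, 0 ≤ x b j} ∧
    (∀ b j : ZMod n, IsExtreme ℝ (Qpoly n) {x ∈ Qpoly n | x b j = 0} ∧
      Module.finrank ℝ (vectorSpan ℝ {x ∈ Qpoly n | x b j = 0}) = 2 * n - 3) ∧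
    {F : Set (Matrix (ZMod n) (ZMod n) ℝ) | IsExtreme ℝ (Qpoly n) F ∧ Convex ℝ F ∧
      Module.finrank ℝ (vectorSpan ℝ F) = 2 * n - 3}.ncard = n ^ 2 := by
  refine ⟨Qpoly_eq_inter n, fun b j => ⟨extreme_coord n b j, face_finrank n hn b j⟩, ?_⟩
  have hset : {F : Set (Matrix (ZMod n) (ZMod n) ℝ) | IsExtreme ℝ (Qpoly n) F ∧ Convex ℝ F ∧
      Module.finrank ℝ (vectorSpan ℝ F) = 2 * n - 3}
      = Set.range (fun bj : ZMod n × ZMod n => {x ∈ Qpoly n | x bj.1 bj.2 = 0}) := by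
    ext F
    constructor
    · rintro ⟨he, hc, hf⟩
      obtain ⟨b, j, rfl⟩ := face_classify n hn he hc hf
      exact ⟨(b, j), rfl⟩
    · rintro ⟨⟨b, j⟩, rfl⟩
      exact ⟨extreme_coord n b j, face_convex n b j, face_finrank n hn b j⟩
  rw [hset, ← Set.image_univ, Set.ncard_image_of_injective _ (face_inj n hn),
    Set.ncard_univ, Nat.card_eq_fintype_card, Fintype.card_prod, ZMod.card, sq]

/-- inside its affine hull, `Q_n` is cut out by the `n²` inequalities
`x_i ≥ 0`; each such inequality defines a facet, and `Q_n` has exactly `n²` facets. -/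
theorem Q_facet_description (n : ℕ) [NeZero n] (hn : 3 ≤ n) :
    Qpoly n = {x | x ∈ affineSpan ℝ (Set.range (Wrow n)) ∧ ∀ b j, 0 ≤ x b j} ∧
    (∀ b j : ZMod n, IsExtreme ℝ (Qpoly n) {x ∈ Qpoly n | x b j = 0} ∧
      Module.finrank ℝ (vectorSpan ℝ {x ∈ Qpoly n | x b j = 0}) = 2 * n - 3) ∧
    {F : Set (Matrix (ZMod n) (ZMod n) ℝ) | IsExtreme ℝ (Qpoly n) F ∧ Convex ℝ F ∧
      Module.finrank ℝ (vectorSpan ℝ F) = 2 * n - 3}.ncard = n ^ 2 := by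
  exact Q_facet_description' n hn
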